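/- Let N ∈ ℕ, let (c₁,…,c_N, σ) ∈ ℝ₊^{N+1} be a nonnegative vector with c₁ > 0 and σ > 0, and define s : ℝ₊^N → ℝ₊ by s(x) = c₁x₁ / (∑_{n=1}^N cₙxₙ + σ). Then the function f : ℝ₊₊^N → ℝ₊₊ given by f(x) = x₁ / log(1 + s(x)) is concave on the positive cone ℝ₊₊^N. -/

import Mathlib

open Real Set

-- step 1: psi := (2+r)*log(1+r) - 2r is nonneg on Ici 0
lemma psi_hasDeriv (r : ℝ) (hr : -1 < r) :
    HasDerivAt (fun r : ℝ => (2 + r) * Real.log (1 + r) - 2 * r)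
      (Real.log (1 + r) + (2 + r) / (1 + r) - 2) r := by
  have h1 : (0:ℝ) < 1 + r := by linarith
  have hL : HasDerivAt (fun r : ℝ => Real.log (1 + r)) (1 / (1 + r)) r := by
    have := (Real.hasDerivAt_log h1.ne').comp r ((hasDerivAt_id r).const_add 1)
    simpa [one_div, Function.comp_def] using this
  have := ((hasDerivAt_id r).const_add 2).mul hL
  have h2 := this.sub ((hasDerivAt_id r).const_mul 2)
  convert h2 using 1
  · rfl
  · rfl
  · rfl
  · simp only [id]; field_simp

lemma log_ge (r : ℝ) (hr : 0 ≤ r) : r / (1 + r) ≤ Real.log (1 + r) := by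
  have h1 : (0:ℝ) < 1 + r := by linarith
  have := Real.log_le_sub_one_of_pos (x := 1/(1+r)) (by positivity)
  rw [Real.log_div one_ne_zero h1.ne', Real.log_one] at this
  have : -(Real.log (1+r)) ≤ 1/(1+r) - 1 := by linarith
  have h2 : 1/(1+r) - 1 = -(r/(1+r)) := by field_simp; ring
  linarith [h2 ▸ this]

lemma psi_nonneg (r : ℝ) (hr : 0 ≤ r) : 0 ≤ (2 + r) * Real.log (1 + r) - 2 * r := by
  have hmono : MonotoneOn (fun r : ℝ => (2 + r) * Real.log (1 + r) - 2 * r) (Ici 0) := by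
    apply monotoneOn_of_deriv_nonneg (convex_Ici 0)
    · exact fun x hx => ((psi_hasDeriv x (by simp at hx; linarith)).continuousAt).continuousWithinAt
    · intro x hx
      rw [interior_Ici] at hx
      exact (psi_hasDeriv x (by exact lt_trans (by norm_num) hx)).differentiableAt.differentiableWithinAt
    · intro x hx
      rw [interior_Ici] at hx
      have hx' : (0:ℝ) < x := hx
      rw [(psi_hasDeriv x (by linarith)).deriv]
      have := log_ge x hx'.le
      have h1 : (0:ℝ) < 1 + x := by linarith
      have h2 : (2 + x) / (1 + x) - 2 = -(x / (1+x)) := by field_simp; ring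
      linarith
  have := hmono (self_mem_Ici) (show r ∈ Ici (0:ℝ) from hr) hr
  simpa using this

lemma phi_concave : ConcaveOn ℝ (Ioi (0:ℝ)) (fun r => r / Real.log (1 + r)) := by
  have key : ∀ r ∈ interior (Ioi (0:ℝ)), (0:ℝ) < r := by
    intro r hr; rw [interior_Ioi] at hr; exact hr
  apply concaveOn_of_hasDerivWithinAt2_nonpos (convex_Ioi 0)
    (f' := fun r => (Real.log (1+r) - r/(1+r)) / (Real.log (1+r))^2)
    (f'' := fun r => ((r/(1+r)^2) * (Real.log (1+r))^2
      - (Real.log (1+r) - r/(1+r)) * (2 * Real.log (1+r) / (1+r))) / (Real.log (1+r))^4)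
  · intro r hr
    have hr' : (0:ℝ) < r := hr
    have h1 : (0:ℝ) < 1 + r := by linarith
    have hL : 0 < Real.log (1+r) := Real.log_pos (by linarith)
    apply ContinuousWithinAt.div
    · exact continuousWithinAt_id
    · exact ((Real.continuousAt_log (by linarith)).comp (by fun_prop)).continuousWithinAt
    · exact hL.ne'
  · intro r hr
    have hr' : (0:ℝ) < r := key r hr
    have h1 : (0:ℝ) < 1 + r := by linarith
    have hL : 0 < Real.log (1+r) := Real.log_pos (by linarith)
    have hLd : HasDerivAt (fun r : ℝ => Real.log (1 + r)) (1 / (1 + r)) r := by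
      have := (Real.hasDerivAt_log h1.ne').comp r ((hasDerivAt_id r).const_add 1)
      simpa [one_div, Function.comp_def] using this
    have := (hasDerivAt_id r).div hLd hL.ne'
    refine HasDerivAt.hasDerivWithinAt ?_
    convert this using 1
    · rfl
    · rfl
    · simp only [id]; ring
  · intro r hr
    have hr' : (0:ℝ) < r := key r hr
    have h1 : (0:ℝ) < 1 + r := by linarith
    have hL : 0 < Real.log (1+r) := Real.log_pos (by linarith)
    have hLd : HasDerivAt (fun r : ℝ => Real.log (1 + r)) (1 / (1 + r)) r := by
      have := (Real.hasDerivAt_log h1.ne').comp r ((hasDerivAt_id r).const_add 1)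
      simpa [one_div, Function.comp_def] using this
    -- numerator N r = log(1+r) - r/(1+r), N' = r/(1+r)^2
    have hN : HasDerivAt (fun r : ℝ => Real.log (1+r) - r/(1+r))
        (r / (1+r)^2) r := by
      have hq : HasDerivAt (fun r : ℝ => r / (1+r))
          ((1 * (1+r) - r * 1) / (1+r)^2) r :=
        (hasDerivAt_id r).div ((hasDerivAt_id r).const_add 1) h1.ne'
      have := hLd.sub hq
      convert this using 1
      · rfl
      · rfl
      · rfl
      · field_simp
        ring
    have hD : HasDerivAt (fun r : ℝ => (Real.log (1+r))^2)
        (2 * Real.log (1+r) / (1+r)) r := by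
      have := hLd.pow 2
      convert this using 1
      · rfl
      · rfl
      · rfl
      · norm_num
        ring
    have := hN.div hD (by positivity)
    refine HasDerivAt.hasDerivWithinAt ?_
    convert this using 2
    · rfl
    · rfl
    · ring
  · intro r hr
    have hr' : (0:ℝ) < r := key r hr
    have h1 : (0:ℝ) < 1 + r := by linarith
    have hL : 0 < Real.log (1+r) := Real.log_pos (by linarith)
    have hpsi := psi_nonneg r hr'.le
    have hnum : r/(1+r)^2 * (Real.log (1+r))^2
        - (Real.log (1+r) - r/(1+r)) * (2 * Real.log (1+r)/(1+r))
        = -(Real.log (1+r) * ((2+r) * Real.log (1+r) - 2*r)) / (1+r)^2 := by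
      field_simp
      ring
    rw [hnum]
    rw [div_nonpos_iff]
    right
    refine ⟨?_, by positivity⟩
    rw [div_nonpos_iff]
    right
    exact ⟨neg_nonpos.mpr (mul_nonneg hL.le hpsi), by positivity⟩



/-- Fact 1 (concavity part): for nonnegative `c` with `c₁ > 0` and `σ > 0`, the function
`x ↦ x₁ / log(1 + s(x))`, where `s(x) = c₁ x₁ / (∑ₙ cₙ xₙ + σ)`, is concave on the
open positive cone `ℝ₊₊^N`. -/
theorem stmt0 (N : ℕ) (hN : 0 < N) (c : Fin N → ℝ) (σ : ℝ)
    (hc : ∀ n, 0 ≤ c n) (hc1 : 0 < c ⟨0, hN⟩) (hσ : 0 < σ) :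
    ConcaveOn ℝ {x : Fin N → ℝ | ∀ i, 0 < x i}
      (fun x : Fin N → ℝ =>
        x ⟨0, hN⟩ /
          Real.log (1 + c ⟨0, hN⟩ * x ⟨0, hN⟩ / (∑ n, c n * x n + σ))) := by
  constructor
  · -- convexity of positive cone
    intro x hx y hy a b ha hb hab i
    simp only [Pi.add_apply, Pi.smul_apply, smul_eq_mul]
    rcases ha.lt_or_eq with h | h
    · have h1 : 0 < a * x i := mul_pos h (hx i)
      have h2 : 0 ≤ b * y i := mul_nonneg hb (hy i).le
      linarith
    · have hb1 : b = 1 := by linarith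
      rw [← h, hb1]
      simpa using hy i
  · intro x hx y hy a b ha hb hab
    simp only [Set.mem_setOf_eq] at hx hy
    beta_reduce
    set i0 : Fin N := ⟨0, hN⟩ with hi0
    clear_value i0
    have hx0 : 0 < x i0 := hx i0
    have hy0 : 0 < y i0 := hy i0
    have hsx : 0 ≤ ∑ n, c n * x n := Finset.sum_nonneg fun n _ => mul_nonneg (hc n) (hx n).le
    have hsy : 0 ≤ ∑ n, c n * y n := Finset.sum_nonneg fun n _ => mul_nonneg (hc n) (hy n).le
    set Dx : ℝ := ∑ n, c n * x n + σ with hDxdef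
    clear_value Dx
    set Dy : ℝ := ∑ n, c n * y n + σ with hDydef
    clear_value Dy
    have hDx : 0 < Dx := by rw [hDxdef]; linarith
    have hDy : 0 < Dy := by rw [hDydef]; linarith
    set V : ℝ := a * Dx + b * Dy with hVdef
    clear_value V
    have hV : 0 < V := by
      rcases ha.lt_or_eq with h | h
      · have h1 : 0 < a * Dx := mul_pos h hDx
        have h2 : 0 ≤ b * Dy := mul_nonneg hb hDy.le
        rw [hVdef]; linarith
      · have hb1 : b = 1 := by linarith
        rw [hVdef, ← h, hb1]; simpa using hDy
    -- combination denominator equals V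
    have hDc : ∑ n, c n * (a • x + b • y) n + σ = V := by
      have h1 : ∑ n, c n * (a • x + b • y) n
          = a * ∑ n, c n * x n + b * ∑ n, c n * y n := by
        rw [Finset.mul_sum, Finset.mul_sum, ← Finset.sum_add_distrib]
        exact Finset.sum_congr rfl fun n _ => by
          simp only [Pi.add_apply, Pi.smul_apply, smul_eq_mul]; ring
      rw [h1, hVdef, hDxdef, hDydef]
      ring_nf
      nlinarith [hab]
    set s1 : ℝ := c i0 * x i0 / Dx with hs1def
    clear_value s1
    set s2 : ℝ := c i0 * y i0 / Dy with hs2def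
    clear_value s2
    have hs1 : 0 < s1 := by rw [hs1def]; positivity
    have hs2 : 0 < s2 := by rw [hs2def]; positivity
    set w1 : ℝ := a * Dx / V with hw1def
    clear_value w1
    set w2 : ℝ := b * Dy / V with hw2def
    clear_value w2
    have hw1 : 0 ≤ w1 := by rw [hw1def]; positivity
    have hw2 : 0 ≤ w2 := by rw [hw2def]; positivity
    have hwsum : w1 + w2 = 1 := by
      rw [hw1def, hw2def, ← add_div, ← hVdef, div_self hV.ne']
    have hcomb := phi_concave.2 (Set.mem_Ioi.2 hs1) (Set.mem_Ioi.2 hs2) hw1 hw2 hwsum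
    simp only [smul_eq_mul] at hcomb
    -- the combined point
    have hz0 : (a • x + b • y) i0 = a * x i0 + b * y i0 := by
      simp [Pi.add_apply, Pi.smul_apply, smul_eq_mul]
    have hS : w1 * s1 + w2 * s2 = c i0 * (a * x i0 + b * y i0) / V := by
      rw [hw1def, hw2def, hs1def, hs2def]
      field_simp
    have hz0pos : 0 < a * x i0 + b * y i0 := by
      rcases ha.lt_or_eq with h | h
      · have h1 : 0 < a * x i0 := mul_pos h hx0
        have h2 : 0 ≤ b * y i0 := mul_nonneg hb hy0.le
        linarith
      · have hb1 : b = 1 := by linarith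
        rw [← h, hb1]; simpa using hy0
    have hSpos : 0 < c i0 * (a * x i0 + b * y i0) / V := by positivity
    -- positive logs
    have hL1 : 0 < Real.log (1 + s1) := Real.log_pos (by linarith)
    have hL2 : 0 < Real.log (1 + s2) := Real.log_pos (by linarith)
    have hL3 : 0 < Real.log (1 + c i0 * (a * x i0 + b * y i0) / V) :=
      Real.log_pos (by linarith)
    rw [hS] at hcomb
    -- final computation
    have key := mul_le_mul_of_nonneg_left hcomb (le_of_lt (show (0:ℝ) < V / c i0 by positivity))
    have E1 : V / c i0 * (w1 * s1) = a * x i0 := by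
      rw [hw1def, hs1def]
      field_simp
    have E2 : V / c i0 * (w2 * s2) = b * y i0 := by
      rw [hw2def, hs2def]
      field_simp
    have E3 : V / c i0 * (c i0 * (a * x i0 + b * y i0) / V) = a * x i0 + b * y i0 := by
      field_simp
    have lhs_eq : V / c i0 * (w1 * (s1 / Real.log (1 + s1)) + w2 * (s2 / Real.log (1 + s2)))
        = a * x i0 / Real.log (1 + s1) + b * y i0 / Real.log (1 + s2) := by
      rw [← E1, ← E2]; ring
    have rhs_eq : V / c i0 * ((c i0 * (a * x i0 + b * y i0) / V)
          / Real.log (1 + c i0 * (a * x i0 + b * y i0) / V))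
        = (a * x i0 + b * y i0) / Real.log (1 + c i0 * (a * x i0 + b * y i0) / V) := by
      rw [← mul_div_assoc, E3]
    rw [lhs_eq, rhs_eq] at key
    simp only [smul_eq_mul]
    rw [hz0, hDc, ← mul_div_assoc, ← mul_div_assoc]
    exact key
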